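/- Let P₁ and P₂ be real polynomials in n variables such that P₁^k is a sum of squares for some odd k ≥ 1 and P₂ is a sum of squares. Then (P₁ + P₂)^k is a sum of squares. -/
import Mathlib

open Finset MvPolynomial

private def SOS {n : ℕ} (p : MvPolynomial (Fin n) ℝ) : Prop :=
  ∃ (r : ℕ) (h : Fin r → MvPolynomial (Fin n) ℝ), p = ∑ i, (h i) ^ 2

private lemma sos_zero {n : ℕ} : SOS (0 : MvPolynomial (Fin n) ℝ) :=
  ⟨0, ![], by simp⟩

private lemma sos_sq {n : ℕ} (p : MvPolynomial (Fin n) ℝ) : SOS (p ^ 2) :=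
  ⟨1, ![p], by simp⟩

private lemma sos_add {n : ℕ} {p q : MvPolynomial (Fin n) ℝ} (hp : SOS p) (hq : SOS q) :
    SOS (p + q) := by
  obtain ⟨r1, f1, rfl⟩ := hp
  obtain ⟨r2, f2, rfl⟩ := hq
  refine ⟨r1 + r2, Fin.append f1 f2, ?_⟩
  rw [Fin.sum_univ_add]
  simp [Fin.append_left, Fin.append_right]

private lemma sos_sum {n : ℕ} {ι : Type*} (s : Finset ι) (f : ι → MvPolynomial (Fin n) ℝ)
    (hf : ∀ i ∈ s, SOS (f i)) : SOS (∑ i ∈ s, f i) :=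
  Finset.sum_induction f SOS (fun _ _ ha hb => sos_add ha hb) sos_zero hf

private lemma sos_mul {n : ℕ} {p q : MvPolynomial (Fin n) ℝ} (hp : SOS p) (hq : SOS q) :
    SOS (p * q) := by
  obtain ⟨r1, f1, rfl⟩ := hp
  obtain ⟨r2, f2, rfl⟩ := hq
  rw [Finset.sum_mul]
  refine sos_sum _ _ (fun i _ => ?_)
  rw [Finset.mul_sum]
  refine sos_sum _ _ (fun j _ => ?_)
  have : f1 i ^ 2 * f2 j ^ 2 = (f1 i * f2 j) ^ 2 := by ring
  rw [this]
  exact sos_sq _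

private lemma sos_smul {n : ℕ} {p : MvPolynomial (Fin n) ℝ} (c : ℝ) (hc : 0 ≤ c)
    (hp : SOS p) : SOS (c • p) := by
  obtain ⟨r, f, rfl⟩ := hp
  refine ⟨r, fun i => MvPolynomial.C (Real.sqrt c) * f i, ?_⟩
  rw [Finset.smul_sum]
  refine Finset.sum_congr rfl (fun i _ => ?_)
  rw [mul_pow, ← map_pow, Real.sq_sqrt hc, MvPolynomial.smul_eq_C_mul]

/-- Key identity: twice the even geometric sum is an explicit sum of squares. -/
private lemma key {R : Type*} [CommRing R] (a b : R) (m : ℕ) :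
    2 * ∑ i ∈ range (2 * m + 1), a ^ i * b ^ (2 * m - i) =
      (a ^ m) ^ 2 + (b ^ m) ^ 2 + ∑ j ∈ range m, (a ^ j * b ^ (m - 1 - j) * (a + b)) ^ 2 := by
  induction m with
  | zero => simp; ring
  | succ m ih =>
    have e1 : ∑ i ∈ range (2 * (m + 1) + 1), a ^ i * b ^ (2 * (m + 1) - i)
        = b ^ 2 * (∑ i ∈ range (2 * m + 1), a ^ i * b ^ (2 * m - i))
          + a ^ (2 * m + 1) * b + a ^ (2 * m + 2) := by
      rw [show 2 * (m + 1) + 1 = (2 * m + 1) + 1 + 1 by ring, Finset.sum_range_succ,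
        Finset.sum_range_succ, Finset.mul_sum]
      congr 1
      · congr 1
        · refine Finset.sum_congr rfl (fun i hi => ?_)
          have hi' : i ≤ 2 * m := by simp only [Finset.mem_range] at hi; omega
          rw [show 2 * (m + 1) - i = (2 * m - i) + 2 by omega]
          ring
        · rw [show 2 * (m + 1) - (2 * m + 1) = 1 by omega]
          ring
      · rw [show 2 * (m + 1) - (2 * m + 1 + 1) = 0 by omega]
        ring
    have e2 : ∑ j ∈ range (m + 1), (a ^ j * b ^ (m + 1 - 1 - j) * (a + b)) ^ 2
        = b ^ 2 * (∑ j ∈ range m, (a ^ j * b ^ (m - 1 - j) * (a + b)) ^ 2)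
          + (a ^ m * (a + b)) ^ 2 := by
      rw [Finset.sum_range_succ, Finset.mul_sum]
      congr 1
      · refine Finset.sum_congr rfl (fun j hj => ?_)
        have hj' : j < m := Finset.mem_range.mp hj
        rw [show m + 1 - 1 - j = (m - 1 - j) + 1 by omega]
        ring
      · rw [show m + 1 - 1 - m = 0 by omega]
        ring
    rw [e1, e2]
    linear_combination b ^ 2 * ih

theorem sum_with_sos_power (n k : ℕ) (hk : Odd k) (hk1 : 1 ≤ k)
    (P₁ P₂ : MvPolynomial (Fin n) ℝ)
    (h1 : ∃ (r : ℕ) (h : Fin r → MvPolynomial (Fin n) ℝ), P₁ ^ k = ∑ i, (h i) ^ 2)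
    (h2 : ∃ (r : ℕ) (h : Fin r → MvPolynomial (Fin n) ℝ), P₂ = ∑ i, (h i) ^ 2) :
    ∃ (r : ℕ) (h : Fin r → MvPolynomial (Fin n) ℝ), (P₁ + P₂) ^ k = ∑ i, (h i) ^ 2 := by
  obtain ⟨m, hm⟩ := hk
  set a : MvPolynomial (Fin n) ℝ := P₁ + P₂ with ha
  set b : MvPolynomial (Fin n) ℝ := P₁ with hb
  set S : MvPolynomial (Fin n) ℝ := ∑ i ∈ range k, a ^ i * b ^ (k - 1 - i) with hS
  have hgeo : S * (a - b) = a ^ k - b ^ k := geom_sum₂_mul a b k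
  have hmain : (P₁ + P₂) ^ k = P₁ ^ k + S * P₂ := by
    have hab : a - b = P₂ := by rw [ha, hb]; ring
    rw [← hab, hgeo]; ring
  -- rewrite S into the form of `key`
  have hS' : S = ∑ i ∈ range (2 * m + 1), a ^ i * b ^ (2 * m - i) := by
    rw [hS, hm]
    refine Finset.sum_congr rfl (fun i hi => ?_)
    congr 1
    all_goals omega
  have h2S : 2 * S = (a ^ m) ^ 2 + (b ^ m) ^ 2
      + ∑ j ∈ range m, (a ^ j * b ^ (m - 1 - j) * (a + b)) ^ 2 := by
    rw [hS']; exact key a b m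
  have hsos2S : SOS (2 * S) := by
    rw [h2S]
    exact sos_add (sos_add (sos_sq _) (sos_sq _)) (sos_sum _ _ (fun j _ => sos_sq _))
  have hsosS : SOS S := by
    have : S = (2⁻¹ : ℝ) • (2 * S) := by
      rw [two_mul, ← two_smul ℝ S, smul_smul]
      norm_num
    rw [this]
    exact sos_smul _ (by norm_num) hsos2S
  have : SOS ((P₁ + P₂) ^ k) := by
    rw [hmain]
    exact sos_add h1 (sos_mul hsosS h2)
  exact this
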